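/- Let k ≥ 2, 0 < ρ < 1, and let η_0, η_1, …, η_k be probability distributions on a finite sample space Ω_η with η_0(y) > 0 for all y ∈ Ω_η and |η_i(y)/η_0(y) − 1| ≤ ρ for all y ∈ Ω_η and all i ∈ [k]. Then there exist a finite sample space Ω_μ ⊆ {−1,1}^k, a BCD(ρ) family {μ_1,…,μ_k} on Ω_μ centered around a distribution μ_0, and a channel Q assigning to each x ∈ Ω_μ a probability distribution Q(·|x) on Ω_η, such that: (a) for every i ∈ [k] and y ∈ Ω_η, η_i(y) = ∑_{x∈Ω_μ} μ_i(x)·Q(y|x); and (b) for every S ⊆ [k], E_{X∼μ_0}[∏_{i∈S}(μ_i(X)/μ_0(X) − 1)] = E_{Y∼η_0}[∏_{i∈S}(η_i(Y)/η_0(Y) − 1)]. -/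

import Mathlib

open Finset

noncomputable section

/-- `p` is a probability distribution on the finite set `Ω`. -/
def IsDist {Ω : Type*} [Fintype Ω] (p : Ω → ℝ) : Prop :=
  (∀ x, 0 ≤ p x) ∧ ∑ x, p x = 1

lemma sum_signs {k : ℕ} (g : Fin k → ℝ → ℝ) :
    ∑ x ∈ Fintype.piFinset (fun _ : Fin k => ({1, -1} : Finset ℝ)), ∏ j, g j (x j)
      = ∏ j, (g j 1 + g j (-1)) := by
  have h := Finset.prod_univ_sum (fun _ : Fin k => ({1, -1} : Finset ℝ)) g
  rw [← h]
  refine Finset.prod_congr rfl fun j _ => ?_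
  rw [Finset.sum_pair (by norm_num : (1:ℝ) ≠ -1)]

/-- any CD(ρ) family `{η_1,…,η_k}` centered around `η₀` can be obtained
from a BCD(ρ) family `{μ_1,…,μ_k}` (positively-halved `μ₀` on a sample space
`Ω_μ ⊆ {−1,1}^k`, with `μ_i(x) = (1+ρx_i)μ₀(x)`) via a channel `Q`, preserving all
higher-order correlations. -/
theorem statement12 (k : ℕ) (hk : 2 ≤ k) (ρ : ℝ) (hρ0 : 0 < ρ) (hρ1 : ρ < 1)
    (Ωη : Type) [Fintype Ωη] (η₀ : Ωη → ℝ) (η : Fin k → Ωη → ℝ)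
    (hη₀ : IsDist η₀) (hη : ∀ i, IsDist (η i)) (hpos : ∀ y, 0 < η₀ y)
    (hclose : ∀ i y, |η i y / η₀ y - 1| ≤ ρ) :
    ∃ (Ωμ : Finset (Fin k → ℝ)) (μ₀ : ↥Ωμ → ℝ) (μ : Fin k → ↥Ωμ → ℝ)
      (Q : ↥Ωμ → Ωη → ℝ),
      (∀ x ∈ Ωμ, ∀ i, x i = 1 ∨ x i = -1) ∧
      IsDist μ₀ ∧
      (∀ i : Fin k, ∑ x : ↥Ωμ, (if x.1 i = 1 then μ₀ x else 0) = 1/2) ∧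
      (∀ i x, μ i x = (1 + ρ * x.1 i) * μ₀ x) ∧
      (∀ x, (∀ y, 0 ≤ Q x y) ∧ ∑ y, Q x y = 1) ∧
      (∀ i y, η i y = ∑ x : ↥Ωμ, μ i x * Q x y) ∧
      (∀ S : Finset (Fin k),
        (∑ x : ↥Ωμ, μ₀ x * ∏ i ∈ S, (μ i x / μ₀ x - 1))
          = ∑ y, η₀ y * ∏ i ∈ S, (η i y / η₀ y - 1)) := by
  have hρ' : ρ ≠ 0 := ne_of_gt hρ0
  have hη₀ne : ∀ y, η₀ y ≠ 0 := fun y => (hpos y).ne'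
  -- the sample space
  set Ωμ : Finset (Fin k → ℝ) := Fintype.piFinset (fun _ : Fin k => ({1, -1} : Finset ℝ))
    with hΩdef
  have hmem : ∀ x ∈ Ωμ, ∀ i, x i = 1 ∨ x i = -1 := by
    intro x hx i
    have := Fintype.mem_piFinset.mp hx i
    simpa using this
  -- the normalized deviations
  set ε : Fin k → Ωη → ℝ := fun i y => (η i y / η₀ y - 1) / ρ with hεdef
  have hεle : ∀ i y, |ε i y| ≤ 1 := by
    intro i y
    rw [hεdef]
    rw [abs_div, abs_of_pos hρ0, div_le_one hρ0]
    exact hclose i y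
  have hρε : ∀ i y, ρ * ε i y = η i y / η₀ y - 1 := by
    intro i y; rw [hεdef]; field_simp
  have hηε : ∀ i y, η₀ y * (ρ * ε i y) = η i y - η₀ y := by
    intro i y; rw [hρε]; field_simp [hη₀ne y]
  have hεzero : ∀ i, ∑ y, η₀ y * ε i y = 0 := by
    intro i
    have h1 : ∀ y, η₀ y * ε i y = (η i y - η₀ y) / ρ := by
      intro y
      rw [eq_div_iff hρ', ← hηε i y]; ring
    rw [Finset.sum_congr rfl fun y _ => h1 y, ← Finset.sum_div, Finset.sum_sub_distrib,
      hη₀.2, (hη i).2]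
    simp
  -- the joint weight
  set w : (Fin k → ℝ) → Ωη → ℝ := fun x y => η₀ y * ∏ j, (1 + x j * ε j y) / 2 with hwdef
  have hw0 : ∀ x ∈ Ωμ, ∀ y, 0 ≤ w x y := by
    intro x hx y
    refine mul_nonneg (hpos y).le (Finset.prod_nonneg fun j _ => ?_)
    have hj : |x j * ε j y| ≤ 1 := by
      rcases hmem x hx j with h | h <;> rw [h] <;> simpa using hεle j y
    have := neg_le_of_abs_le hj
    linarith
  -- key sum identities
  have hsumS : ∀ (S : Finset (Fin k)) (y : Ωη),
      ∑ x ∈ Ωμ, (∏ i ∈ S, x i) * w x y = η₀ y * ∏ i ∈ S, ε i y := by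
    intro S y
    have hterm : ∀ x ∈ Ωμ, (∏ i ∈ S, x i) * w x y
        = η₀ y * ∏ j, ((if j ∈ S then x j else 1) * ((1 + x j * ε j y) / 2)) := by
      intro x hx
      rw [hwdef, Finset.prod_mul_distrib]
      have : ∏ j, (if j ∈ S then x j else 1) = ∏ i ∈ S, x i := by
        rw [Finset.prod_ite_mem, Finset.univ_inter]
      rw [this]; ring
    rw [Finset.sum_congr rfl hterm, ← Finset.mul_sum,
      sum_signs (fun j t => (if j ∈ S then t else 1) * ((1 + t * ε j y) / 2))]
    congr 1
    calc ∏ j, ((if j ∈ S then (1:ℝ) else 1) * ((1 + 1 * ε j y) / 2)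
          + (if j ∈ S then (-1:ℝ) else 1) * ((1 + (-1) * ε j y) / 2))
        = ∏ j, (if j ∈ S then ε j y else 1) := by
          refine Finset.prod_congr rfl fun j _ => ?_
          by_cases hj : j ∈ S <;> simp [hj] <;> ring
      _ = ∏ i ∈ S, ε i y := by rw [Finset.prod_ite_mem, Finset.univ_inter]
  have hsum1 : ∀ y, ∑ x ∈ Ωμ, w x y = η₀ y := by
    intro y
    have := hsumS ∅ y
    simpa using this
  -- μ₀
  set μ₀' : (Fin k → ℝ) → ℝ := fun x => ∑ y, w x y with hμ₀def
  have hμ₀nonneg : ∀ x ∈ Ωμ, 0 ≤ μ₀' x := fun x hx =>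
    Finset.sum_nonneg fun y _ => hw0 x hx y
  have hμ₀sum : ∑ x ∈ Ωμ, μ₀' x = 1 := by
    rw [hμ₀def]
    rw [Finset.sum_comm]
    rw [Finset.sum_congr rfl fun y _ => hsum1 y]
    exact hη₀.2
  have hwzero : ∀ x ∈ Ωμ, μ₀' x = 0 → ∀ y, w x y = 0 := by
    intro x hx h0 y
    have := (Finset.sum_eq_zero_iff_of_nonneg fun y _ => hw0 x hx y).mp h0
    exact this y (Finset.mem_univ y)
  -- sign-weighted sums of μ₀'
  have hsignμ : ∀ (S : Finset (Fin k)),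
      ∑ x ∈ Ωμ, (∏ i ∈ S, x i) * μ₀' x = ∑ y, η₀ y * ∏ i ∈ S, ε i y := by
    intro S
    rw [hμ₀def]
    simp only [Finset.mul_sum]
    rw [Finset.sum_comm]
    exact Finset.sum_congr rfl fun y _ => hsumS S y
  refine ⟨Ωμ, fun x => μ₀' x.1, fun i x => (1 + ρ * x.1 i) * μ₀' x.1,
    fun x y => if μ₀' x.1 = 0 then η₀ y else w x.1 y / μ₀' x.1,
    hmem, ?_, ?_, fun i x => rfl, ?_, ?_, ?_⟩
  · -- IsDist μ₀
    constructor
    · intro x; exact hμ₀nonneg x.1 x.2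
    · rw [Finset.sum_coe_sort Ωμ μ₀']; exact hμ₀sum
  · -- half condition
    intro i
    rw [Finset.sum_coe_sort Ωμ (fun x => if x i = 1 then μ₀' x else 0)]
    have hterm : ∀ x ∈ Ωμ, (if x i = 1 then μ₀' x else 0)
        = (μ₀' x + (∏ j ∈ {i}, x j) * μ₀' x) / 2 := by
      intro x hx
      rw [Finset.prod_singleton]
      rcases hmem x hx i with h | h <;> rw [h] <;> norm_num <;> ring
    rw [Finset.sum_congr rfl hterm, ← Finset.sum_div, Finset.sum_add_distrib,
      hμ₀sum, hsignμ {i}]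
    have : ∑ y, η₀ y * ∏ j ∈ {i}, ε j y = 0 := by
      simpa using hεzero i
    rw [this]
    norm_num
  · -- Q is a channel
    intro x
    constructor
    · intro y
      by_cases h0 : μ₀' x.1 = 0
      · simp [h0, (hpos y).le]
      · simp only [h0, if_false]
        exact div_nonneg (hw0 x.1 x.2 y) (hμ₀nonneg x.1 x.2)
    · by_cases h0 : μ₀' x.1 = 0
      · simp [h0, hη₀.2]
      · simp only [h0, if_false]
        rw [← Finset.sum_div]
        rw [show ∑ y, w x.1 y = μ₀' x.1 from rfl]
        exact div_self h0
  · -- marginal condition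
    intro i y
    have hterm : ∀ x : ↥Ωμ, (1 + ρ * x.1 i) * μ₀' x.1 *
        (if μ₀' x.1 = 0 then η₀ y else w x.1 y / μ₀' x.1)
        = (1 + ρ * x.1 i) * w x.1 y := by
      intro x
      by_cases h0 : μ₀' x.1 = 0
      · rw [h0, hwzero x.1 x.2 h0 y]; simp
      · simp only [h0, if_false]; field_simp
    rw [Finset.sum_congr rfl fun x _ => hterm x,
      Finset.sum_coe_sort Ωμ (fun x => (1 + ρ * x i) * w x y)]
    have hsplit : ∀ x ∈ Ωμ, (1 + ρ * x i) * w x y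
        = w x y + ρ * ((∏ j ∈ {i}, x j) * w x y) := by
      intro x hx; simp; ring
    rw [Finset.sum_congr rfl hsplit, Finset.sum_add_distrib, hsum1 y,
      ← Finset.mul_sum, hsumS {i} y]
    have : ρ * (η₀ y * ∏ j ∈ {i}, ε j y) = η i y - η₀ y := by
      rw [Finset.prod_singleton, ← hηε i y]; ring
    rw [this]; ring
  · -- correlations
    intro S
    have hterm : ∀ x : ↥Ωμ,
        μ₀' x.1 * ∏ i ∈ S, ((1 + ρ * x.1 i) * μ₀' x.1 / μ₀' x.1 - 1)
        = ρ ^ S.card * ((∏ i ∈ S, x.1 i) * μ₀' x.1) := by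
      intro x
      by_cases h0 : μ₀' x.1 = 0
      · rw [h0]; ring
      · have h1 : ∀ i ∈ S, (1 + ρ * x.1 i) * μ₀' x.1 / μ₀' x.1 - 1 = ρ * x.1 i := by
          intro i _
          rw [mul_div_assoc, div_self h0]; ring
        rw [Finset.prod_congr rfl h1, Finset.prod_mul_distrib, Finset.prod_const]
        ring
    rw [Finset.sum_congr rfl fun x _ => hterm x, ← Finset.mul_sum,
      Finset.sum_coe_sort Ωμ (fun x => (∏ i ∈ S, x i) * μ₀' x), hsignμ S,
      Finset.mul_sum]
    refine Finset.sum_congr rfl fun y _ => ?_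
    rw [Finset.prod_congr rfl fun i _ => (hρε i y).symm, Finset.prod_mul_distrib,
      Finset.prod_const]
    ring
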